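/- arXiv:2402.06129 — 7 statements merged into one kernel-verified Lean document; each statement's English description precedes it below -/
import Mathlib

section
/- For the variable-step BDF2 kernels, the discrete orthogonal convolution (DOC) kernels defined recursively by θ_0^{(n)} = 1/d_0^{(n)} and θ_{n-j}^{(n)} = -(1/d_0^{(j)}) · Σ_{i=j+1}^{n} θ_{n-i}^{(n)} d_{i-j}^{(i)} for 2 ≤ j ≤ n-1 admit the explicit formula θ_{n-j}^{(n)} = (1/d_0^{(j)}) · ∏_{i=j+1}^{n} r_i/(1+2r_i) for 2 ≤ j ≤ n, and in particular θ_{n-j}^{(n)} > 0. -/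
open Finset

/-- Leading BDF2 kernel coefficient d_0^{(n)} = (1+2 r_n)/(1+r_n). -/
noncomputable def d0 (r : ℕ → ℝ) (n : ℕ) : ℝ := (1 + 2 * r n) / (1 + r n)

/-- The variable-step BDF2 kernels d_j^{(n)}. -/
noncomputable def dker (r : ℕ → ℝ) (n j : ℕ) : ℝ :=
  if j = 0 then (1 + 2 * r n) / (1 + r n)
  else if j = 1 then -(r n) / (1 + r n)
  else 0

/-- The DOC kernels (explicit formula): θ_{n-j}^{(n)} is written theta r n j. -/
noncomputable def theta (r : ℕ → ℝ) (n j : ℕ) : ℝ :=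
  (1 / d0 r j) * ∏ i ∈ Finset.Icc (j + 1) n, r i / (1 + 2 * r i)

/-- Discrete time-difference quotient ∂_τ v^j = (v^j - v^{j-1})/τ_j. -/
noncomputable def dtau (τ : ℕ → ℝ) (v : ℕ → ℝ) (j : ℕ) : ℝ := (v j - v (j - 1)) / τ j

/-- The variable-step BDF2 operator D_2 v^n = ∑_{j=1}^n d_{n-j}^{(n)} ∂_τ v^j. -/
noncomputable def D2 (r τ : ℕ → ℝ) (v : ℕ → ℝ) (n : ℕ) : ℝ :=
  ∑ j ∈ Finset.Icc 1 n, dker r n (n - j) * dtau τ v j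

/-- the recursively defined DOC kernels of the BDF2 kernels admit the
explicit product formula, and are positive. -/
theorem stmt_0 (r : ℕ → ℝ) (θ : ℕ → ℕ → ℝ)
    (hr : ∀ k, 2 ≤ k → 0 < r k)
    (hdiag : ∀ n, 2 ≤ n → θ n n = 1 / d0 r n)
    (hrec : ∀ n j, 2 ≤ j → j ≤ n - 1 →
      θ n j = -(1 / d0 r j) * ∑ i ∈ Finset.Icc (j + 1) n, θ n i * dker r i (i - j)) :
    ∀ n j, 2 ≤ j → j ≤ n →
      θ n j = (1 / d0 r j) * ∏ i ∈ Finset.Icc (j + 1) n, r i / (1 + 2 * r i) ∧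
      0 < θ n j := by
  have key : ∀ k n j, 2 ≤ j → j + k = n →
      θ n j = (1 / d0 r j) * ∏ i ∈ Finset.Icc (j + 1) n, r i / (1 + 2 * r i) := by
    intro k
    induction k with
    | zero =>
      intro n j hj hn
      simp only [Nat.add_zero] at hn
      subst hn
      rw [hdiag j hj, Finset.Icc_eq_empty (by omega), Finset.prod_empty, mul_one]
    | succ k ih =>
      intro n j hj hn
      have hj1 : j + 1 ≤ n := by omega
      have hrecj := hrec n j hj (by omega)
      have hsum : ∑ i ∈ Finset.Icc (j + 1) n, θ n i * dker r i (i - j)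
          = θ n (j+1) * (-(r (j+1)) / (1 + r (j+1))) := by
        rw [Finset.sum_eq_single (j+1)]
        · simp [dker, show j+1-j = 1 by omega]
        · intro i hi hne
          simp only [Finset.mem_Icc] at hi
          have h2i : 2 ≤ i - j := by omega
          simp [dker, show i - j ≠ 0 by omega, show i - j ≠ 1 by omega]
        · intro h; exact absurd (Finset.mem_Icc.mpr ⟨le_refl _, hj1⟩) h
      have ihv := ih n (j+1) (by omega) (by omega)
      rw [hrecj, hsum, ihv]
      have hr1 : 0 < r (j+1) := hr _ (by omega)
      have h1 : (0:ℝ) < 1 + r (j+1) := by linarith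
      have h2 : (0:ℝ) < 1 + 2 * r (j+1) := by linarith
      have hprod : ∏ i ∈ Finset.Icc (j + 1) n, r i / (1 + 2 * r i)
          = (r (j+1) / (1 + 2 * r (j+1))) * ∏ i ∈ Finset.Icc (j + 2) n, r i / (1 + 2 * r i) := by
        rw [show Finset.Icc (j+1) n = Finset.Ico (j+1) (n+1) by rw [Finset.Ico_add_one_right_eq_Icc],
            show Finset.Icc (j+2) n = Finset.Ico (j+2) (n+1) by rw [Finset.Ico_add_one_right_eq_Icc]]
        exact Finset.prod_eq_prod_Ico_succ_bot (by omega) _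
      have h1' : (1 + r (j+1)) ≠ 0 := ne_of_gt h1
      have h2' : (1 + 2 * r (j+1)) ≠ 0 := ne_of_gt h2
      have hkey : -((1 + r (j+1))/(1 + 2*r (j+1)) * (-(r (j+1))/(1 + r (j+1))))
          = r (j+1)/(1 + 2*r (j+1)) := by field_simp
      rw [hprod, show (1:ℝ)/d0 r (j+1) = (1 + r (j+1))/(1 + 2*r (j+1)) from by
        unfold d0; rw [one_div_div]]
      simp only [show j+1+1 = j+2 from rfl]
      linear_combination ((1 / d0 r j) * ∏ i ∈ Finset.Icc (j+2) n, r i / (1 + 2 * r i)) * hkey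
  intro n j hj hjn
  have hf := key (n - j) n j hj (by omega)
  refine ⟨hf, ?_⟩
  rw [hf]
  have hdj : 0 < d0 r j := by
    have := hr j hj
    unfold d0
    positivity
  apply mul_pos (by positivity)
  apply Finset.prod_pos
  intro i hi
  simp only [Finset.mem_Icc] at hi
  have := hr i (by omega)
  positivity
end

section
/- The DOC kernels θ_{n-j}^{(n)} = (1/d_0^{(j)}) · ∏_{i=j+1}^{n} r_i/(1+2r_i) satisfy Σ_{j=2}^{n} θ_{n-j}^{(n)} = 1 - ∏_{i=2}^{n} r_i/(1+2r_i), and hence Σ_{j=2}^{n} θ_{n-j}^{(n)} < 1 for every n ≥ 2. -/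
open Finset

lemma sum_theta (r : ℕ → ℝ) (hr : ∀ k, 2 ≤ k → 0 < r k) :
    ∀ n, 2 ≤ n →
      (∑ j ∈ Finset.Icc 2 n, theta r n j
        = 1 - ∏ i ∈ Finset.Icc 2 n, r i / (1 + 2 * r i)) := by
  intro n hn
  induction n, hn using Nat.le_induction with
  | base =>
    have h2 : 0 < r 2 := hr 2 le_rfl
    simp only [theta, d0, show Finset.Icc 2 2 = {2} from rfl, Finset.sum_singleton,
      Finset.prod_singleton]
    rw [show Finset.Icc 3 2 = ∅ by rfl, Finset.prod_empty]
    field_simp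
    ring
  | succ n hn ih =>
    have hrn : 0 < r (n + 1) := hr _ (by omega)
    have hden : (0:ℝ) < 1 + 2 * r (n + 1) := by linarith
    have hsplit : ∀ j, j ≤ n → theta r (n+1) j = theta r n j * (r (n+1) / (1 + 2 * r (n+1))) := by
      intro j hj
      unfold theta
      rw [Finset.prod_Icc_succ_top (by omega)]
      ring
    have hsum : ∑ j ∈ Finset.Icc 2 (n+1), theta r (n+1) j
        = (∑ j ∈ Finset.Icc 2 n, theta r n j) * (r (n+1) / (1 + 2 * r (n+1)))
          + theta r (n+1) (n+1) := by
      rw [Finset.sum_Icc_succ_top (by omega), Finset.sum_mul]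
      congr 1
      apply Finset.sum_congr rfl
      intro j hj
      exact hsplit j (Finset.mem_Icc.mp hj).2
    have htop : theta r (n+1) (n+1) = (1 + r (n+1)) / (1 + 2 * r (n+1)) := by
      unfold theta d0
      rw [show Finset.Icc (n+1+1) (n+1) = ∅ by simp, Finset.prod_empty]
      rw [one_div, mul_one, inv_div]
    have hP : ∏ x ∈ Finset.Icc 2 n, (1 + 2 * r x) ≠ 0 := by
      apply Finset.prod_ne_zero_iff.mpr
      intro i hi
      have := hr i (Finset.mem_Icc.mp hi).1
      positivity
    rw [hsum, ih, htop, Finset.prod_Icc_succ_top (by omega)]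
    rw [Finset.prod_div_distrib]
    field_simp
    ring

/-- sum of the DOC kernels. -/
theorem stmt_1 (r : ℕ → ℝ) (hr : ∀ k, 2 ≤ k → 0 < r k) :
    ∀ n, 2 ≤ n →
      (∑ j ∈ Finset.Icc 2 n, theta r n j
        = 1 - ∏ i ∈ Finset.Icc 2 n, r i / (1 + 2 * r i)) ∧
      (∑ j ∈ Finset.Icc 2 n, theta r n j) < 1 := by
  intro n hn
  have h := sum_theta r hr n hn
  refine ⟨h, ?_⟩
  rw [h]
  have hprod : 0 < ∏ i ∈ Finset.Icc 2 n, r i / (1 + 2 * r i) := by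
    apply Finset.prod_pos
    intro i hi
    have hi2 : 2 ≤ i := (Finset.mem_Icc.mp hi).1
    have := hr i hi2
    positivity
  linarith
end

section
/- The DOC kernels θ satisfy the discrete orthogonality identity Σ_{i=j}^{n} θ_{n-i}^{(n)} d_{i-j}^{(i)} = δ_{nj} for all 2 ≤ j ≤ n, where δ_{nj} is the Kronecker delta. -/
open Finset

/-- the discrete orthogonality identity of the DOC kernels. -/
theorem stmt_2 (r : ℕ → ℝ) (hr : ∀ k, 2 ≤ k → 0 < r k) :
    ∀ n j, 2 ≤ j → j ≤ n →
      ∑ i ∈ Finset.Icc j n, theta r n i * dker r i (i - j)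
        = if n = j then (1 : ℝ) else 0 := by
  intro n j hj hjn
  have hrj := hr j hj
  have h1j : (1 : ℝ) + r j ≠ 0 := by nlinarith
  have h2j : (1 : ℝ) + 2 * r j ≠ 0 := by nlinarith
  rcases eq_or_lt_of_le hjn with h | h
  · subst h
    rw [if_pos rfl, Finset.Icc_self, Finset.sum_singleton]
    simp only [theta, dker, d0, Nat.sub_self, if_pos rfl, ite_true]
    rw [Finset.Icc_eq_empty (by omega), Finset.prod_empty]
    field_simp
  · -- j < n
    rw [if_neg (by omega)]
    have hrj1 := hr (j + 1) (by omega)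
    have h1j1 : (1 : ℝ) + r (j + 1) ≠ 0 := by nlinarith
    have h2j1 : (1 : ℝ) + 2 * r (j + 1) ≠ 0 := by nlinarith
    have hsplit1 : Finset.Icc j n = (Finset.Icc (j + 1) n).cons j (by simp) := by
      ext x; simp [Finset.mem_Icc]; omega
    have hsplit2 : Finset.Icc (j + 1) n = (Finset.Icc (j + 2) n).cons (j + 1) (by simp) := by
      ext x; simp [Finset.mem_Icc]; omega
    rw [hsplit1, Finset.sum_cons, hsplit2, Finset.sum_cons]
    have hzero : ∀ i ∈ Finset.Icc (j + 2) n, theta r n i * dker r i (i - j) = 0 := by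
      intro i hi
      simp only [Finset.mem_Icc] at hi
      have : dker r i (i - j) = 0 := by
        simp only [dker]
        rw [if_neg (by omega), if_neg (by omega)]
      rw [this, mul_zero]
    rw [Finset.sum_eq_zero hzero, add_zero]
    have hQ : ∏ i ∈ Finset.Icc (j + 1) n, r i / (1 + 2 * r i)
        = (r (j + 1) / (1 + 2 * r (j + 1))) * ∏ i ∈ Finset.Icc (j + 2) n, r i / (1 + 2 * r i) := by
      rw [hsplit2, Finset.prod_cons]
    simp only [theta, dker, d0, Nat.sub_self, if_pos rfl, ite_true]
    rw [show j + 1 - j = 1 from by omega]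
    rw [if_neg one_ne_zero, if_pos rfl, hQ]
    set Q := ∏ i ∈ Finset.Icc (j + 2) n, r i / (1 + 2 * r i) with hQdef
    field_simp
    ring
end

section
/- The DOC kernels satisfy the reverse orthogonality identity Σ_{i=j}^{n} d_{n-i}^{(n)} θ_{i-j}^{(i)} = δ_{nj} for all 2 ≤ j ≤ n. -/
open Finset

/-- the reverse orthogonality identity of the DOC kernels. -/
theorem stmt_3 (r : ℕ → ℝ) (hr : ∀ k, 2 ≤ k → 0 < r k) :
    ∀ n j, 2 ≤ j → j ≤ n →
      ∑ i ∈ Finset.Icc j n, dker r n (n - i) * theta r i j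
        = if n = j then (1 : ℝ) else 0 := by
  intro n j hj hjn
  rcases hjn.eq_or_lt with h | h
  · -- n = j
    subst h
    have hrj : (0:ℝ) < r j := hr j hj
    rw [Finset.Icc_self, Finset.sum_singleton]
    simp only [Nat.sub_self, dker, theta, d0, if_pos rfl, if_pos rfl]
    rw [Finset.Icc_eq_empty (by omega), Finset.prod_empty]
    have h1 : (1:ℝ) + r j ≠ 0 := by nlinarith
    have h2 : (1:ℝ) + 2 * r j ≠ 0 := by nlinarith
    simp only [if_true]
    field_simp
  · -- j < n
    obtain ⟨m, rfl⟩ : ∃ m, n = m + 1 := ⟨n - 1, by omega⟩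
    have hjm : j ≤ m := by omega
    have hrn : (0:ℝ) < r (m+1) := hr _ (by omega)
    have h1 : (1:ℝ) + r (m+1) ≠ 0 := by nlinarith
    have h2 : (1:ℝ) + 2 * r (m+1) ≠ 0 := by nlinarith
    rw [if_neg (by omega)]
    rw [Finset.sum_Icc_succ_top (by omega)]
    have hmid : ∑ i ∈ Finset.Icc j m, dker r (m+1) (m+1-i) * theta r i j
        = dker r (m+1) 1 * theta r m j := by
      rw [Finset.sum_eq_single_of_mem m (by simp [hjm])]
      · norm_num
      · intro i hi hne
        have hi' : i ≤ m := (Finset.mem_Icc.mp hi).2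
        have : 2 ≤ m + 1 - i := by omega
        simp [dker, show m + 1 - i ≠ 0 by omega, show m + 1 - i ≠ 1 by omega]
    rw [hmid, Nat.sub_self]
    have hth : theta r (m+1) j = theta r m j * (r (m+1) / (1 + 2 * r (m+1))) := by
      unfold theta
      rw [Finset.prod_Icc_succ_top (by omega)]
      ring
    rw [hth]
    simp only [dker, if_pos rfl, if_neg one_ne_zero, zero_ne_one, ↓reduceIte]
    field_simp
    ring
end

section
/- With notation as before, σ_4^n := Σ_{i=2}^{n} θ_{n-i}^{(n)} σ_3^i equals ∏_{ℓ=2}^{n} r_ℓ/(1+2r_ℓ) · Σ_{k=2}^{n} Σ_{i=k}^{n} 1/(d_0^{(i)} d_0^{(k)}), and satisfies σ_4^n ≤ 2^{-n} n(n-1) for every n ≥ 2. -/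
open Finset

section Aux
variable (r : ℕ → ℝ)

lemma d0_ge_one (hr : ∀ k, 2 ≤ k → 0 < r k) {i : ℕ} (hi : 2 ≤ i) : 1 ≤ d0 r i := by
  have h := hr i hi
  rw [d0, le_div_iff₀ (by linarith)]
  linarith

lemma prod_split {k i : ℕ} (hk : 2 ≤ k) (hki : k ≤ i) :
    (∏ l ∈ Icc (k+1) i, r l / (1 + 2 * r l)) * ∏ l ∈ Icc 2 k, r l / (1 + 2 * r l)
      = ∏ l ∈ Icc 2 i, r l / (1 + 2 * r l) := by
  have e1 : Icc 2 k = Ioc 1 k := by ext x; simp; omega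
  have e2 : Icc (k+1) i = Ioc k i := by ext x; simp
  have e3 : Icc 2 i = Ioc 1 i := by ext x; simp; omega
  rw [e1, e2, e3, mul_comm]
  exact Finset.prod_Ioc_consecutive _ (by omega) hki

lemma gauss : ∀ n : ℕ, 2 ≤ n → (∑ i ∈ Icc 2 n, ((i:ℝ) - 1)) = n * (n - 1) / 2 := by
  intro n hn
  induction n, hn using Nat.le_induction with
  | base => norm_num
  | succ m hm ih =>
    rw [Finset.sum_Icc_succ_top (by omega), ih]
    push_cast; ring

end Aux

/-- σ_4^n equals the product-times-double-sum and is bounded by 2^(-n) n(n-1). -/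
theorem stmt_6 (r : ℕ → ℝ) (hr : ∀ k, 2 ≤ k → 0 < r k) :
    ∀ n, 2 ≤ n →
      (∑ i ∈ Finset.Icc 2 n, theta r n i *
          ∑ k ∈ Finset.Icc 2 i, theta r i k * ∏ l ∈ Finset.Icc 2 k, r l / (1 + 2 * r l))
        = (∏ l ∈ Finset.Icc 2 n, r l / (1 + 2 * r l)) *
            ∑ k ∈ Finset.Icc 2 n, ∑ i ∈ Finset.Icc k n, 1 / (d0 r i * d0 r k) ∧
      (∑ i ∈ Finset.Icc 2 n, theta r n i *
          ∑ k ∈ Finset.Icc 2 i, theta r i k * ∏ l ∈ Finset.Icc 2 k, r l / (1 + 2 * r l))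
        ≤ (2 : ℝ) ^ (-(n : ℤ)) * (n : ℝ) * ((n : ℝ) - 1) := by
  intro n hn
  set P : ℝ := ∏ l ∈ Finset.Icc 2 n, r l / (1 + 2 * r l) with hP
  -- main rewriting to pre-swap form
  have hmain : (∑ i ∈ Finset.Icc 2 n, theta r n i *
          ∑ k ∈ Finset.Icc 2 i, theta r i k * ∏ l ∈ Finset.Icc 2 k, r l / (1 + 2 * r l))
      = P * ∑ i ∈ Finset.Icc 2 n, ∑ k ∈ Finset.Icc 2 i, 1 / (d0 r i * d0 r k) := by
    rw [Finset.mul_sum]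
    refine Finset.sum_congr rfl ?_
    intro i hi
    rw [Finset.mem_Icc] at hi
    rw [Finset.mul_sum, Finset.mul_sum]
    refine Finset.sum_congr rfl ?_
    intro k hk
    rw [Finset.mem_Icc] at hk
    have h1 := prod_split r hk.1 hk.2
    have h2 := prod_split r hi.1 hi.2
    rw [← one_div_mul_one_div]
    simp only [theta, hP]
    linear_combination (1 / d0 r i) * (1 / d0 r k) *
        (∏ l ∈ Finset.Icc (i+1) n, r l / (1 + 2 * r l)) * h1
      + (1 / d0 r i) * (1 / d0 r k) * h2
  have hswap : (∑ i ∈ Finset.Icc 2 n, ∑ k ∈ Finset.Icc 2 i, 1 / (d0 r i * d0 r k))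
      = ∑ k ∈ Finset.Icc 2 n, ∑ i ∈ Finset.Icc k n, 1 / (d0 r i * d0 r k) := by
    have e : ∀ a b : ℕ, Finset.Icc a b = Finset.Ico a (b+1) := by
      intro a b; ext x; simp [Nat.lt_succ_iff]
    simp only [e]
    exact (Finset.sum_Ico_Ico_comm 2 (n+1) (fun k i => 1 / (d0 r i * d0 r k))).symm
  constructor
  · rw [hmain, hswap]
  · rw [hmain]
    -- bounds
    have hterm : ∀ i k : ℕ, 2 ≤ i → 2 ≤ k → 1 / (d0 r i * d0 r k) ≤ 1 ∧
        0 ≤ 1 / (d0 r i * d0 r k) := by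
      intro i k hi hk
      have h1 := d0_ge_one r hr hi
      have h2 := d0_ge_one r hr hk
      have hge : 1 ≤ d0 r i * d0 r k := by nlinarith
      constructor
      · rw [div_le_one (by linarith)]; linarith
      · positivity
    have hSnn : 0 ≤ ∑ i ∈ Finset.Icc 2 n, ∑ k ∈ Finset.Icc 2 i, 1 / (d0 r i * d0 r k) := by
      apply Finset.sum_nonneg; intro i hi
      apply Finset.sum_nonneg; intro k hk
      rw [Finset.mem_Icc] at hi hk
      exact (hterm i k hi.1 hk.1).2
    have hS : (∑ i ∈ Finset.Icc 2 n, ∑ k ∈ Finset.Icc 2 i, 1 / (d0 r i * d0 r k))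
        ≤ (n : ℝ) * ((n:ℝ) - 1) / 2 := by
      rw [← gauss n hn]
      apply Finset.sum_le_sum
      intro i hi
      rw [Finset.mem_Icc] at hi
      calc (∑ k ∈ Finset.Icc 2 i, 1 / (d0 r i * d0 r k))
          ≤ ∑ k ∈ Finset.Icc 2 i, (1:ℝ) := by
            apply Finset.sum_le_sum
            intro k hk
            rw [Finset.mem_Icc] at hk
            exact (hterm i k hi.1 hk.1).1
        _ = ((i:ℝ) - 1) := by
            rw [Finset.sum_const, Nat.card_Icc, nsmul_eq_mul, mul_one]
            have h3 : i + 1 - 2 = i - 1 := by omega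
            rw [h3, Nat.cast_sub (by omega : 1 ≤ i)]
            norm_num
    have hP0 : 0 ≤ P := by
      apply Finset.prod_nonneg
      intro l hl
      rw [Finset.mem_Icc] at hl
      have := hr l hl.1
      positivity
    have hPle : P ≤ (1/2:ℝ) ^ (n - 1) := by
      rw [hP]
      calc (∏ l ∈ Finset.Icc 2 n, r l / (1 + 2 * r l))
          ≤ ∏ l ∈ Finset.Icc 2 n, (1/2:ℝ) := by
            apply Finset.prod_le_prod
            · intro l hl
              rw [Finset.mem_Icc] at hl
              have := hr l hl.1; positivity
            · intro l hl
              rw [Finset.mem_Icc] at hl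
              have h := hr l hl.1
              rw [div_le_div_iff₀ (by linarith) (by norm_num)]
              linarith
        _ = (1/2:ℝ) ^ (n - 1) := by
            rw [Finset.prod_const, Nat.card_Icc]
            congr 1
    have hfin : (1/2:ℝ) ^ (n - 1) * ((n:ℝ) * ((n:ℝ) - 1) / 2)
        = (2:ℝ) ^ (-(n:ℤ)) * (n:ℝ) * ((n:ℝ) - 1) := by
      have h2 : (2:ℝ) ^ (-(n:ℤ)) = (1/2:ℝ) ^ n := by
        rw [zpow_neg, zpow_natCast, one_div, inv_pow]
      have hn1 : n - 1 + 1 = n := by omega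
      have hp : (1/2:ℝ) ^ n = (1/2:ℝ) ^ (n-1) * (1/2) := by
        rw [← pow_succ, hn1]
      rw [h2, hp]
      ring
    calc P * ∑ i ∈ Finset.Icc 2 n, ∑ k ∈ Finset.Icc 2 i, 1 / (d0 r i * d0 r k)
        ≤ (1/2:ℝ) ^ (n - 1) * ((n:ℝ) * ((n:ℝ) - 1) / 2) :=
          mul_le_mul hPle hS hSnn (by positivity)
      _ = (2:ℝ) ^ (-(n:ℤ)) * (n:ℝ) * ((n:ℝ) - 1) := hfin
end

section
/- Let f : ℝ → ℝ be Lipschitz with constant L_f and let the perturbed BDF2 error equation hold: D_2 ṽ^n = f(v̄^n) − f(v^n) + ε^n for 2 ≤ n ≤ N, where ṽ^n = v̄^n − v^n and D_2 is the variable-step BDF2 operator. If the maximum step size τ ≤ 1/(4 L_f), then |ṽ^n| ≤ 4 exp(4 L_f t_{n-1}) ( |ṽ^1| + τ |∂_τ ṽ^1| + t_n · max_{2≤i≤n} |ε^i| ) for 2 ≤ n ≤ N, with stability constant independent of the step ratios r_k. -/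
set_option maxHeartbeats 1000000


open Finset

lemma bdf_geom_eq (i : ℕ) : ∀ m, i ≤ m → (∑ k ∈ Icc i m, (1:ℝ)/2^k) = 2/2^i - 1/2^m := by
  intro m
  induction m with
  | zero => intro h; interval_cases i; simp; norm_num
  | succ m ih =>
    intro h
    rcases Nat.lt_or_ge m i with hm | hm
    · have hi : i = m + 1 := by omega
      subst hi
      rw [Finset.Icc_self, Finset.sum_singleton]; ring
    · rw [Finset.sum_Icc_succ_top (by omega), ih hm]
      ring

lemma bdf_geom_le (i m : ℕ) : (∑ k ∈ Icc i m, (1:ℝ)/2^k) ≤ 2/2^i := by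
  rcases Nat.lt_or_ge m i with hm | hm
  · rw [Finset.Icc_eq_empty (by omega)]; positivity
  · rw [bdf_geom_eq i m hm]
    have : (0:ℝ) < 1/2^m := by positivity
    linarith

lemma bdf_geom2_le : ∀ k : ℕ, (∑ i ∈ Icc 2 k, (2:ℝ)^i) ≤ 2^(k+1) := by
  intro k
  induction k with
  | zero => norm_num
  | succ k ih =>
    rcases Nat.lt_or_ge k 1 with hk | hk
    · interval_cases k <;> norm_num
    · rw [Finset.sum_Icc_succ_top (by omega)]
      have : (2:ℝ)^(k+1+1) = 2^(k+1) + 2^(k+1) := by ring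
      linarith

lemma bdf_sum_swap (a b : ℕ) (F : ℕ → ℕ → ℝ) :
    ∑ k ∈ Icc a b, ∑ i ∈ Icc a k, F k i = ∑ i ∈ Icc a b, ∑ k ∈ Icc i b, F k i := by
  apply Finset.sum_comm'
  intro k i
  simp only [mem_Icc]
  omega

lemma bdf_inv_bound (x : ℝ) (h0 : 0 ≤ x) (h1 : x ≤ 1/2) :
    (1 - x)⁻¹ ≤ Real.exp (2 * Real.log 2 * x) := by
  have hx1 : (0:ℝ) < 1 - x := by linarith
  have hconv := convexOn_exp.2 (Set.mem_univ (-Real.log 2)) (Set.mem_univ 0)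
    (by linarith : (0:ℝ) ≤ 2*x) (by linarith : (0:ℝ) ≤ 1 - 2*x) (by ring)
  simp only [smul_eq_mul] at hconv
  rw [Real.exp_zero] at hconv
  have h2 : Real.exp (-(2 * Real.log 2 * x)) ≤ 1 - x := by
    have he : 2*x * (-Real.log 2) + (1 - 2*x) * 0 = -(2 * Real.log 2 * x) := by ring
    rw [he] at hconv
    have hel : Real.exp (-Real.log 2) = 2⁻¹ := by
      rw [Real.exp_neg, Real.exp_log two_pos]
    calc Real.exp (-(2*Real.log 2*x)) ≤ 2*x*Real.exp (-Real.log 2) + (1-2*x)*1 := hconv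
      _ = 2*x*2⁻¹ + (1-2*x)*1 := by rw [hel]
      _ = 1 - x := by ring
  rw [inv_le_comm₀ hx1 (Real.exp_pos _), ← Real.exp_neg]
  exact h2

lemma bdf_prod_aux (n : ℕ) (B : ℝ) (hB : 0 ≤ B) (C : ℕ → ℝ)
    (hC1 : ∀ i, 2 ≤ i → i ≤ n → C i ≤ 1/2) :
    ∀ m, m ≤ n → B + ∑ i ∈ Icc 2 m, C i * (B * ∏ j ∈ Icc 2 i, (1 - C j)⁻¹)
      ≤ B * ∏ i ∈ Icc 2 m, (1 - C i)⁻¹ := by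
  intro m
  induction m with
  | zero => intro _; simp
  | succ m ih =>
    intro hmn
    rcases Nat.lt_or_ge m 1 with hm | hm
    · interval_cases m; simp
    · have h2m : 2 ≤ m + 1 := by omega
      rw [Finset.sum_Icc_succ_top h2m, Finset.prod_Icc_succ_top h2m]
      set P : ℝ := ∏ j ∈ Icc 2 m, (1 - C j)⁻¹ with hP
      set c : ℝ := C (m+1) with hc
      have hc1 : c ≤ 1/2 := hC1 (m+1) h2m hmn
      have hcpos : (0:ℝ) < 1 - c := by linarith
      have hkey : (B * (P * (1-c)⁻¹)) * (1 - c) = B * P := by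
        field_simp
      have hih := ih (by omega)
      nlinarith [hih, hkey]

lemma bdf_gronwall (n : ℕ) (B : ℝ) (hB : 0 ≤ B) (C x : ℕ → ℝ)
    (hC0 : ∀ i, 2 ≤ i → i ≤ n → 0 ≤ C i)
    (hC1 : ∀ i, 2 ≤ i → i ≤ n → C i ≤ 1/2)
    (h : ∀ m, 2 ≤ m → m ≤ n → x m ≤ B + ∑ i ∈ Icc 2 m, C i * x i) :
    ∀ m, 2 ≤ m → m ≤ n → x m ≤ B * ∏ i ∈ Icc 2 m, (1 - C i)⁻¹ := by
  intro m
  induction m using Nat.strong_induction_on with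
  | _ m IH =>
    intro h2 hn
    obtain ⟨m', rfl⟩ : ∃ m', m = m' + 1 := ⟨m - 1, by omega⟩
    have h2m : 2 ≤ m' + 1 := h2
    have hsum : x (m'+1) ≤ B + (∑ i ∈ Icc 2 m', C i * x i) + C (m'+1) * x (m'+1) := by
      have := h (m'+1) h2 hn
      rwa [Finset.sum_Icc_succ_top h2m, ← add_assoc] at this
    have hstep : ∑ i ∈ Icc 2 m', C i * x i
        ≤ ∑ i ∈ Icc 2 m', C i * (B * ∏ j ∈ Icc 2 i, (1 - C j)⁻¹) := by
      apply Finset.sum_le_sum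
      intro i hi
      rw [mem_Icc] at hi
      have hxi := IH i (by omega) hi.1 (by omega)
      exact mul_le_mul_of_nonneg_left hxi (hC0 i hi.1 (by omega))
    have haux := bdf_prod_aux n B hB C hC1 m' (by omega)
    have hc1 : C (m'+1) ≤ 1/2 := hC1 (m'+1) h2m hn
    have hcpos : (0:ℝ) < 1 - C (m'+1) := by linarith
    set P : ℝ := ∏ j ∈ Icc 2 m', (1 - C j)⁻¹ with hP
    have hx : x (m'+1) ≤ (B * P) / (1 - C (m'+1)) := by
      rw [le_div_iff₀ hcpos]
      nlinarith [hsum, hstep, haux]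
    rw [Finset.prod_Icc_succ_top h2m, ← hP, ← mul_assoc]
    rw [div_eq_mul_inv] at hx
    exact hx

/-- mesh-robust stability of the variable-step BDF2 scheme. -/
theorem stmt_10 (N : ℕ) (f : ℝ → ℝ) (Lf : ℝ) (hLf : 0 < Lf)
    (hLip : ∀ a b : ℝ, |f a - f b| ≤ Lf * |a - b|)
    (τ : ℕ → ℝ) (τm : ℝ) (r : ℕ → ℝ)
    (hτ : ∀ k, 1 ≤ k → k ≤ N → 0 < τ k ∧ τ k ≤ τm)
    (hr : ∀ k, 2 ≤ k → r k = τ k / τ (k - 1))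
    (hτm : τm ≤ 1 / (4 * Lf))
    (v vbar ε : ℕ → ℝ)
    (heq : ∀ n, 2 ≤ n → n ≤ N →
      D2 r τ (fun k => vbar k - v k) n = f (vbar n) - f (v n) + ε n) :
    ∀ n, ∀ h2 : 2 ≤ n, n ≤ N →
      |vbar n - v n| ≤
        4 * Real.exp (4 * Lf * ∑ j ∈ Finset.Icc 1 (n - 1), τ j) *
          (|vbar 1 - v 1| + τm * |dtau τ (fun k => vbar k - v k) 1| +
            (∑ j ∈ Finset.Icc 1 n, τ j) *
              (Finset.Icc 2 n).sup' (Finset.nonempty_Icc.mpr h2) (fun i => |ε i|)) := by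
  intro n h2 hnN
  have hN2 : 2 ≤ N := le_trans h2 hnN
  set w : ℕ → ℝ := fun k => vbar k - v k with hw
  set a : ℕ → ℝ := fun j => |dtau τ w j| with ha
  set x : ℕ → ℝ := fun m => |w m| with hx
  set E : ℝ := (Finset.Icc 2 n).sup' (Finset.nonempty_Icc.mpr h2) (fun i => |ε i|) with hE
  have hEmem : ∀ i, 2 ≤ i → i ≤ n → |ε i| ≤ E := fun i hi1 hi2 =>
    Finset.le_sup' (fun i => |ε i|) (Finset.mem_Icc.mpr ⟨hi1, hi2⟩)
  have hE0 : 0 ≤ E := le_trans (abs_nonneg _) (hEmem 2 le_rfl h2)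
  have hτpos : ∀ k, 1 ≤ k → k ≤ N → 0 < τ k := fun k hk1 hk2 => (hτ k hk1 hk2).1
  have hτm0 : 0 < τm := lt_of_lt_of_le (hτpos 1 le_rfl (by omega)) (hτ 1 le_rfl (by omega)).2
  have hLτ : Lf * τm ≤ 1/4 := by
    rw [le_div_iff₀ (by positivity)] at hτm
    nlinarith
  have hx0 : ∀ m, 0 ≤ x m := fun m => abs_nonneg _
  have ha0 : ∀ m, 0 ≤ a m := fun m => abs_nonneg _
  -- Step (i): one-step recursion for a
  have hA : ∀ k, 2 ≤ k → k ≤ N → a k ≤ 1/2 * a (k-1) + (Lf * x k + |ε k|) := by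
    intro k hk2 hkN
    have hρ : 0 < r k := by
      rw [hr k hk2]
      exact div_pos (hτpos k (by omega) hkN) (hτpos (k-1) (by omega) (by omega))
    have h1ρ : (0:ℝ) < 1 + r k := by linarith
    have hD : D2 r τ w k = dker r k 1 * dtau τ w (k-1) + dker r k 0 * dtau τ w k := by
      unfold D2
      have hsub : ({k-1, k} : Finset ℕ) ⊆ Finset.Icc 1 k := by
        intro j hj
        simp only [Finset.mem_insert, Finset.mem_singleton] at hj
        rw [Finset.mem_Icc]
        omega
      have hzero : ∀ j ∈ Finset.Icc 1 k, j ∉ ({k-1, k} : Finset ℕ) →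
          dker r k (k - j) * dtau τ w j = 0 := by
        intro j hj hj'
        rw [Finset.mem_Icc] at hj
        simp only [Finset.mem_insert, Finset.mem_singleton] at hj'
        push_neg at hj'
        have : k - j ≠ 0 ∧ k - j ≠ 1 := by omega
        rw [dker, if_neg this.1, if_neg this.2, zero_mul]
      rw [← Finset.sum_subset hsub hzero]
      rw [Finset.sum_pair (by omega : k - 1 ≠ k)]
      have e1 : k - (k-1) = 1 := by omega
      have e2 : k - k = 0 := by omega
      rw [e1, e2]
    have h0 := heq k hk2 hkN
    rw [hD] at h0
    have e1 : dker r k 0 = (1 + 2 * r k) / (1 + r k) := by simp [dker]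
    have e2 : dker r k 1 = -(r k) / (1 + r k) := by norm_num [dker]
    rw [e1, e2] at h0
    have hkey : (1 + 2 * r k) * dtau τ w k
        = r k * dtau τ w (k-1) + (1 + r k) * (f (vbar k) - f (v k) + ε k) := by
      have hne : (1:ℝ) + r k ≠ 0 := ne_of_gt h1ρ
      field_simp at h0
      linear_combination h0
    have hLwk : |f (vbar k) - f (v k) + ε k| ≤ Lf * x k + |ε k| := by
      refine le_trans (abs_add_le _ _) ?_
      have := hLip (vbar k) (v k)
      have hxk : |vbar k - v k| = x k := rfl
      rw [hxk] at this
      linarith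
    have habs : (1 + 2 * r k) * a k ≤ r k * a (k-1) + (1 + r k) * (Lf * x k + |ε k|) := by
      have l1 : (1 + 2 * r k) * a k = |(1 + 2 * r k) * dtau τ w k| := by
        rw [abs_mul, abs_of_pos (by linarith : (0:ℝ) < 1 + 2 * r k)]
      rw [l1, hkey]
      refine le_trans (abs_add_le _ _) ?_
      rw [abs_mul, abs_mul, abs_of_pos hρ, abs_of_pos h1ρ]
      have := mul_le_mul_of_nonneg_left hLwk (le_of_lt h1ρ)
      have hh : |dtau τ w (k-1)| = a (k-1) := rfl
      rw [hh]
      linarith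
    have hQ0 : 0 ≤ Lf * x k + |ε k| := by positivity
    nlinarith [habs, hρ, hQ0, ha0 (k-1), ha0 k, mul_nonneg hρ.le (ha0 (k-1)),
      mul_nonneg hρ.le hQ0, mul_nonneg hρ.le (ha0 k)]
  -- Step (ii): iterated bound for a
  have hA2 : ∀ k, 1 ≤ k → k ≤ N →
      (2:ℝ)^k * a k ≤ 2 * a 1 + ∑ i ∈ Icc 2 k, (2:ℝ)^i * (Lf * x i + |ε i|) := by
    intro k hk1
    induction k, hk1 using Nat.le_induction with
    | base => intro _; simp
    | succ k hk IH =>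
      intro hkN
      have hAk := hA (k+1) (by omega) hkN
      simp only [Nat.add_sub_cancel] at hAk
      have hIH := IH (by omega)
      rw [Finset.sum_Icc_succ_top (by omega : 2 ≤ k+1)]
      have hmul := mul_le_mul_of_nonneg_left hAk (by positivity : (0:ℝ) ≤ 2^(k+1))
      have hps : (2:ℝ)^(k+1) = 2^k * 2 := pow_succ 2 k
      rw [hps] at hmul ⊢
      nlinarith [hmul, hIH]
  -- Step (iii): telescoping for x
  have hX : ∀ m, 1 ≤ m → m ≤ N → x m ≤ x 1 + ∑ k ∈ Icc 2 m, τ k * a k := by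
    intro m hm1
    induction m, hm1 using Nat.le_induction with
    | base => intro _; simp
    | succ m hm IH =>
      intro hmN
      have hτp := hτpos (m+1) (by omega) hmN
      have hwstep : w (m+1) = w m + τ (m+1) * dtau τ w (m+1) := by
        show w (m+1) = w m + τ (m+1) * ((w (m+1) - w ((m+1) - 1)) / τ (m+1))
        simp only [Nat.add_sub_cancel]
        field_simp
        ring
      have hstep : x (m+1) ≤ x m + τ (m+1) * a (m+1) := by
        have hxx : x (m+1) = |w m + τ (m+1) * dtau τ w (m+1)| := by rw [← hwstep]
        rw [hxx]
        refine le_trans (abs_add_le _ _) ?_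
        rw [abs_mul, abs_of_pos hτp]
      rw [Finset.sum_Icc_succ_top (by omega : 2 ≤ m+1)]
      have hIH := IH (by omega)
      linarith
  -- Setup for Gronwall
  set T : ℝ := ∑ j ∈ Finset.Icc 1 n, τ j with hT
  have hτnn2 : ∀ k, 1 ≤ k → k ≤ n → 0 ≤ τ k := fun k h1 h2' => (hτpos k h1 (le_trans h2' hnN)).le
  have hT0 : 0 ≤ T := Finset.sum_nonneg (by
    intro j hj; rw [Finset.mem_Icc] at hj; exact hτnn2 j hj.1 hj.2)
  set C : ℕ → ℝ := fun i => Lf * ∑ k ∈ Finset.Icc i n, τ k * ((2:ℝ)^i / 2^k) with hC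
  set B : ℝ := x 1 + τm * a 1 + 2 * T * E with hB
  have hB0 : 0 ≤ B := by
    rw [hB]
    have h1 := hx0 1
    have h2' := ha0 1
    have h3 : (0:ℝ) ≤ 2 * T * E := mul_nonneg (mul_nonneg (by norm_num) hT0) hE0
    nlinarith [mul_nonneg hτm0.le (ha0 1)]
  have hC0 : ∀ i, 2 ≤ i → i ≤ n → 0 ≤ C i := by
    intro i hi1 hi2
    apply mul_nonneg hLf.le
    apply Finset.sum_nonneg
    intro k hk; rw [Finset.mem_Icc] at hk
    exact mul_nonneg (hτnn2 k (by omega) hk.2) (by positivity)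
  have hC1 : ∀ i, 2 ≤ i → i ≤ n → C i ≤ 1/2 := by
    intro i hi1 hi2
    have hs : ∑ k ∈ Finset.Icc i n, τ k * ((2:ℝ)^i/2^k) ≤ 2 * τm := by
      calc ∑ k ∈ Finset.Icc i n, τ k * ((2:ℝ)^i/2^k)
          ≤ ∑ k ∈ Finset.Icc i n, τm * (2:ℝ)^i * (1/2^k) := by
            apply Finset.sum_le_sum
            intro k hk; rw [Finset.mem_Icc] at hk
            have h1 : τ k ≤ τm := (hτ k (by omega) (le_trans hk.2 hnN)).2
            have h2' : (0:ℝ) ≤ (2:ℝ)^i/2^k := by positivity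
            calc τ k * ((2:ℝ)^i/2^k) ≤ τm * ((2:ℝ)^i/2^k) := mul_le_mul_of_nonneg_right h1 h2'
              _ = τm * (2:ℝ)^i * (1/2^k) := by ring
        _ = τm * (2:ℝ)^i * ∑ k ∈ Finset.Icc i n, (1:ℝ)/2^k := by
            rw [Finset.mul_sum]
        _ ≤ τm * (2:ℝ)^i * (2/2^i) := by
            apply mul_le_mul_of_nonneg_left (bdf_geom_le i n) (by positivity)
        _ = 2 * τm := by field_simp
    have : C i = Lf * ∑ k ∈ Finset.Icc i n, τ k * ((2:ℝ)^i/2^k) := rfl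
    rw [this]
    nlinarith [mul_le_mul_of_nonneg_left hs hLf.le, hLτ]
  -- main Gronwall-type inequality
  have hmain : ∀ m, 2 ≤ m → m ≤ n → x m ≤ B + ∑ i ∈ Finset.Icc 2 m, C i * x i := by
    intro m hm2 hmn
    have hmN : m ≤ N := le_trans hmn hnN
    have h1 := hX m (by omega) hmN
    have hper : ∀ k ∈ Finset.Icc 2 m, τ k * a k ≤
        τm * (2/2^k) * a 1 + (∑ i ∈ Finset.Icc 2 k, τ k / 2^k * ((2:ℝ)^i * (Lf * x i)))
          + 2 * τ k * E := by
      intro k hk; rw [Finset.mem_Icc] at hk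
      have hkN : k ≤ N := le_trans hk.2 hmN
      have h2k : (0:ℝ) < 2^k := by positivity
      have hτk := hτ k (by omega) hkN
      have hIA := hA2 k (by omega) hkN
      have hsplit : ∑ i ∈ Finset.Icc 2 k, (2:ℝ)^i * (Lf * x i + |ε i|)
          = (∑ i ∈ Finset.Icc 2 k, (2:ℝ)^i * (Lf * x i)) + ∑ i ∈ Finset.Icc 2 k, (2:ℝ)^i * |ε i| := by
        rw [← Finset.sum_add_distrib]
        exact Finset.sum_congr rfl (fun i _ => by ring)
      have hεk : ∑ i ∈ Finset.Icc 2 k, (2:ℝ)^i * |ε i| ≤ 2^(k+1) * E := by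
        calc ∑ i ∈ Finset.Icc 2 k, (2:ℝ)^i * |ε i| ≤ ∑ i ∈ Finset.Icc 2 k, (2:ℝ)^i * E := by
              apply Finset.sum_le_sum
              intro i hi; rw [Finset.mem_Icc] at hi
              exact mul_le_mul_of_nonneg_left (hEmem i hi.1 (by omega)) (by positivity)
          _ = (∑ i ∈ Finset.Icc 2 k, (2:ℝ)^i) * E := by rw [Finset.sum_mul]
          _ ≤ 2^(k+1) * E := mul_le_mul_of_nonneg_right (bdf_geom2_le k) hE0
      have hτa : τ k * a k = (τ k / 2^k) * ((2:ℝ)^k * a k) := by field_simp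
      have hdiv0 : (0:ℝ) ≤ τ k / 2^k := div_nonneg hτk.1.le h2k.le
      have hmul : (τ k / 2^k) * ((2:ℝ)^k * a k)
          ≤ (τ k / 2^k) * (2 * a 1 + ((∑ i ∈ Finset.Icc 2 k, (2:ℝ)^i * (Lf * x i))
            + ∑ i ∈ Finset.Icc 2 k, (2:ℝ)^i * |ε i|)) := by
        rw [← hsplit]
        exact mul_le_mul_of_nonneg_left hIA hdiv0
      have p1 : (τ k / 2^k) * (2 * a 1) ≤ τm * (2/2^k) * a 1 := by
        have e : (τ k / 2^k) * (2 * a 1) = τ k * ((2/2^k) * a 1) := by ring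
        have e2 : τm * (2/2^k) * a 1 = τm * ((2/2^k) * a 1) := by ring
        rw [e, e2]
        exact mul_le_mul_of_nonneg_right hτk.2 (mul_nonneg (by positivity) (ha0 1))
      have p2 : (τ k / 2^k) * (∑ i ∈ Finset.Icc 2 k, (2:ℝ)^i * (Lf * x i))
          = ∑ i ∈ Finset.Icc 2 k, τ k / 2^k * ((2:ℝ)^i * (Lf * x i)) := Finset.mul_sum _ _ _
      have p3 : (τ k / 2^k) * (∑ i ∈ Finset.Icc 2 k, (2:ℝ)^i * |ε i|) ≤ 2 * τ k * E := by
        have h5 := mul_le_mul_of_nonneg_left hεk hdiv0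
        have e : (τ k / 2^k) * ((2:ℝ)^(k+1) * E) = 2 * τ k * E := by
          rw [pow_succ]; field_simp
        linarith
      rw [hτa]
      refine le_trans hmul ?_
      rw [mul_add, mul_add]
      linarith
    have hsum1 := Finset.sum_le_sum hper
    rw [Finset.sum_add_distrib, Finset.sum_add_distrib] at hsum1
    have hSa : ∑ k ∈ Finset.Icc 2 m, τm * (2/2^k) * a 1 ≤ τm * a 1 := by
      have e : ∑ k ∈ Finset.Icc 2 m, τm * (2/2^k) * a 1
          = (2 * τm * a 1) * ∑ k ∈ Finset.Icc 2 m, (1:ℝ)/2^k := by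
        rw [Finset.mul_sum]
        exact Finset.sum_congr rfl (fun k _ => by ring)
      rw [e]
      have h6 := mul_le_mul_of_nonneg_left (bdf_geom_le 2 m)
        (mul_nonneg (mul_nonneg (by norm_num : (0:ℝ) ≤ 2) hτm0.le) (ha0 1))
      have e2 : (2:ℝ)/2^2 = 1/2 := by norm_num
      rw [e2] at h6
      nlinarith [h6, ha0 1, hτm0]
    have hSx : ∑ k ∈ Finset.Icc 2 m, ∑ i ∈ Finset.Icc 2 k, τ k/2^k * ((2:ℝ)^i * (Lf * x i))
        ≤ ∑ i ∈ Finset.Icc 2 m, C i * x i := by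
      rw [bdf_sum_swap 2 m (fun k i => τ k/2^k * ((2:ℝ)^i * (Lf * x i)))]
      apply Finset.sum_le_sum
      intro i hi; rw [Finset.mem_Icc] at hi
      have e : ∑ k ∈ Finset.Icc i m, τ k/2^k * ((2:ℝ)^i * (Lf * x i))
          = (Lf * ∑ k ∈ Finset.Icc i m, τ k * ((2:ℝ)^i/2^k)) * x i := by
        rw [Finset.mul_sum, Finset.sum_mul]
        exact Finset.sum_congr rfl (fun k _ => by ring)
      rw [e]
      have hCi : C i = Lf * ∑ k ∈ Finset.Icc i n, τ k * ((2:ℝ)^i/2^k) := rfl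
      rw [hCi]
      apply mul_le_mul_of_nonneg_right _ (hx0 i)
      apply mul_le_mul_of_nonneg_left _ hLf.le
      apply Finset.sum_le_sum_of_subset_of_nonneg (Finset.Icc_subset_Icc_right hmn)
      intro k hk _
      rw [Finset.mem_Icc] at hk
      exact mul_nonneg (hτnn2 k (by omega) hk.2) (by positivity)
    have hSε : ∑ k ∈ Finset.Icc 2 m, 2 * τ k * E ≤ 2 * T * E := by
      have hsub : ∑ k ∈ Finset.Icc 2 m, τ k ≤ T := by
        rw [hT]
        apply Finset.sum_le_sum_of_subset_of_nonneg (Finset.Icc_subset_Icc (by omega) hmn)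
        intro k hk _
        rw [Finset.mem_Icc] at hk
        exact hτnn2 k hk.1 hk.2
      calc ∑ k ∈ Finset.Icc 2 m, 2 * τ k * E = 2 * E * ∑ k ∈ Finset.Icc 2 m, τ k := by
            rw [Finset.mul_sum]
            exact Finset.sum_congr rfl (fun k _ => by ring)
        _ ≤ 2 * E * T := mul_le_mul_of_nonneg_left hsub (mul_nonneg (by norm_num) hE0)
        _ = 2 * T * E := by ring
    rw [hB]
    linarith [h1, hsum1, hSa, hSx, hSε]
  -- apply Gronwall
  have hG := bdf_gronwall n B hB0 C x hC0 hC1 hmain n h2 le_rfl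
  -- bound the product
  have hprod1 : (∏ i ∈ Finset.Icc 2 n, (1 - C i)⁻¹)
      ≤ ∏ i ∈ Finset.Icc 2 n, Real.exp (2*Real.log 2 * C i) := by
    apply Finset.prod_le_prod
    · intro i hi; rw [Finset.mem_Icc] at hi
      have h7 := hC1 i hi.1 hi.2
      have h8 : (0:ℝ) < 1 - C i := by linarith
      positivity
    · intro i hi; rw [Finset.mem_Icc] at hi
      exact bdf_inv_bound (C i) (hC0 i hi.1 hi.2) (hC1 i hi.1 hi.2)
  have hprod2 : ∏ i ∈ Finset.Icc 2 n, Real.exp (2*Real.log 2 * C i)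
      = Real.exp (2*Real.log 2 * ∑ i ∈ Finset.Icc 2 n, C i) := by
    rw [← Real.exp_sum, Finset.mul_sum]
  have hSC : ∑ i ∈ Finset.Icc 2 n, C i ≤ 2 * Lf * ∑ k ∈ Finset.Icc 2 n, τ k := by
    have e : ∑ i ∈ Finset.Icc 2 n, C i
        = ∑ i ∈ Finset.Icc 2 n, ∑ k ∈ Finset.Icc i n, Lf * (τ k * ((2:ℝ)^i/2^k)) := by
      apply Finset.sum_congr rfl
      intro i _
      show Lf * ∑ k ∈ Finset.Icc i n, τ k * ((2:ℝ)^i/2^k) = _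
      rw [Finset.mul_sum]
    rw [e, ← bdf_sum_swap 2 n (fun k i => Lf * (τ k * ((2:ℝ)^i/2^k))), Finset.mul_sum]
    apply Finset.sum_le_sum
    intro k hk; rw [Finset.mem_Icc] at hk
    have hkN : k ≤ N := le_trans hk.2 hnN
    have hτk0 : 0 ≤ τ k := (hτpos k (by omega) hkN).le
    have h2k : (0:ℝ) < 2^k := by positivity
    have e2 : ∑ i ∈ Finset.Icc 2 k, Lf * (τ k * ((2:ℝ)^i/2^k))
        = (Lf * τ k / 2^k) * ∑ i ∈ Finset.Icc 2 k, (2:ℝ)^i := by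
      rw [Finset.mul_sum]
      exact Finset.sum_congr rfl (fun i _ => by ring)
    rw [e2]
    have h9 := mul_le_mul_of_nonneg_left (bdf_geom2_le k)
      (div_nonneg (mul_nonneg hLf.le hτk0) h2k.le)
    have e3 : (Lf * τ k / 2^k) * (2:ℝ)^(k+1) = 2 * Lf * τ k := by
      rw [pow_succ]; field_simp
    linarith
  have hτsplit : ∑ k ∈ Finset.Icc 2 n, τ k = τ n + ∑ k ∈ Finset.Icc 2 (n-1), τ k := by
    have hnn : n = (n-1) + 1 := by omega
    conv_lhs => rw [hnn]
    rw [Finset.sum_Icc_succ_top (by omega : 2 ≤ (n-1)+1), ← hnn]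
    ring
  have hT'def : ∑ j ∈ Finset.Icc 1 (n-1), τ j = τ 1 + ∑ j ∈ Finset.Icc 2 (n-1), τ j := by
    have hico : Finset.Icc 1 (n-1) = insert 1 (Finset.Icc 2 (n-1)) := by
      ext j; simp only [Finset.mem_Icc, Finset.mem_insert]; omega
    rw [hico, Finset.sum_insert (by simp [Finset.mem_Icc])]
  have hexp : 2*Real.log 2 * ∑ i ∈ Finset.Icc 2 n, C i
      ≤ Real.log 2 + 4*Lf*∑ j ∈ Finset.Icc 1 (n-1), τ j := by
    have hlog2pos : 0 < Real.log 2 := Real.log_pos (by norm_num)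
    have hlog2le : Real.log 2 ≤ 1 := by
      have := Real.log_two_lt_d9; linarith
    have hS'0 : 0 ≤ ∑ k ∈ Finset.Icc 2 (n-1), τ k := by
      apply Finset.sum_nonneg
      intro k hk; rw [Finset.mem_Icc] at hk
      exact hτnn2 k (by omega) (by omega)
    have hLfτn : Lf * τ n ≤ 1/4 := by
      nlinarith [(hτ n (by omega) hnN).2, hLτ, hLf]
    have hS9 := hSC
    rw [hτsplit] at hS9
    rw [hT'def]
    have step1 : 2*Real.log 2 * (∑ i ∈ Finset.Icc 2 n, C i)
        ≤ 2*Real.log 2 * (2*Lf*(τ n + ∑ k ∈ Finset.Icc 2 (n-1), τ k)) := by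
      apply mul_le_mul_of_nonneg_left _ (by positivity)
      linarith
    have e4 : 2*Real.log 2 * (2*Lf*(τ n + ∑ k ∈ Finset.Icc 2 (n-1), τ k))
        = 4*(Real.log 2 * (Lf * τ n)) + 4*(Real.log 2 * (Lf * ∑ k ∈ Finset.Icc 2 (n-1), τ k)) := by
      ring
    have h10 : Real.log 2 * (Lf * τ n) ≤ Real.log 2 * (1/4) :=
      mul_le_mul_of_nonneg_left hLfτn hlog2pos.le
    have h11 : Real.log 2 * (Lf * ∑ k ∈ Finset.Icc 2 (n-1), τ k)
        ≤ 1 * (Lf * ∑ k ∈ Finset.Icc 2 (n-1), τ k) :=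
      mul_le_mul_of_nonneg_right hlog2le (mul_nonneg hLf.le hS'0)
    have h12 : 0 ≤ Lf * τ 1 := mul_nonneg hLf.le (hτnn2 1 le_rfl (by omega))
    linarith
  have hPn : ∏ i ∈ Finset.Icc 2 n, (1 - C i)⁻¹
      ≤ 2 * Real.exp (4*Lf*∑ j ∈ Finset.Icc 1 (n-1), τ j) := by
    refine le_trans hprod1 ?_
    rw [hprod2]
    refine le_trans (Real.exp_le_exp.mpr hexp) ?_
    rw [Real.exp_add, Real.exp_log two_pos]
  have hfin : x n ≤ B * (2 * Real.exp (4*Lf*∑ j ∈ Finset.Icc 1 (n-1), τ j)) :=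
    le_trans hG (mul_le_mul_of_nonneg_left hPn hB0)
  -- conclude
  rw [show |vbar n - v n| = x n from rfl,
     show |vbar 1 - v 1| = x 1 from rfl,
     show |dtau τ w 1| = a 1 from rfl]
  rw [hB] at hfin
  have hexpK := Real.exp_pos (4*Lf*∑ j ∈ Finset.Icc 1 (n-1), τ j)
  nlinarith [hfin, mul_nonneg hexpK.le (hx0 1),
    mul_nonneg hexpK.le (mul_nonneg hτm0.le (ha0 1))]
end

section
/- Convolution transformation identity: for any sequence (v^j), multiplying the BDF2 operator by DOC kernels and summing yields Σ_{i=2}^{n} θ_{n-i}^{(n)} D_2 v^i = ∂_τ v^n + ∂_τ v^1 · Σ_{i=2}^{n} θ_{n-i}^{(n)} d_{i-1}^{(i)} for every 2 ≤ n ≤ N, where ∂_τ v^j = (v^j − v^{j-1})/τ_j. -/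
open Finset

lemma dker_zero_of_two_le (r : ℕ → ℝ) (m j : ℕ) (h : 2 ≤ j) : dker r m j = 0 := by
  unfold dker
  rw [if_neg (by omega), if_neg (by omega)]

lemma D2_eq (r τ : ℕ → ℝ) (v : ℕ → ℝ) (m : ℕ) (hm : 2 ≤ m) :
    D2 r τ v m = dker r m 1 * dtau τ v (m - 1) + dker r m 0 * dtau τ v m := by
  unfold D2
  rw [← Finset.sum_subset (s₁ := ({m - 1, m} : Finset ℕ))
      (by intro x hx; simp only [Finset.mem_insert, Finset.mem_singleton] at hx
          rcases hx with h | h <;> simp [Finset.mem_Icc] <;> omega)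
      (by intro x hx hx'
          simp only [Finset.mem_insert, Finset.mem_singleton, not_or] at hx'
          rw [dker_zero_of_two_le]
          · ring
          · simp only [Finset.mem_Icc] at hx; omega)]
  rw [Finset.sum_pair (by omega : m - 1 ≠ m)]
  have h1 : m - (m - 1) = 1 := by omega
  rw [h1, Nat.sub_self]

lemma theta_succ (r : ℕ → ℝ) (n i : ℕ) (h : i ≤ n) :
    theta r (n + 1) i = theta r n i * (r (n + 1) / (1 + 2 * r (n + 1))) := by
  unfold theta
  rw [Finset.prod_Icc_succ_top (by omega : i + 1 ≤ n + 1)]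
  ring

lemma theta_diag (r : ℕ → ℝ) (n : ℕ) : theta r n n = 1 / d0 r n := by
  unfold theta
  rw [Finset.Icc_eq_empty (by omega), Finset.prod_empty, mul_one]

/-- the convolution transformation identity. -/
theorem stmt_16 (N : ℕ) (r τ : ℕ → ℝ) (hr : ∀ k, 2 ≤ k → 0 < r k) :
    ∀ v : ℕ → ℝ, ∀ n, 2 ≤ n → n ≤ N →
      ∑ i ∈ Finset.Icc 2 n, theta r n i * D2 r τ v i
        = dtau τ v n + dtau τ v 1 * ∑ i ∈ Finset.Icc 2 n, theta r n i * dker r i (i - 1) := by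
  intro v n hn _hN
  clear _hN
  induction n, hn using Nat.le_induction with
  | base =>
    rw [Finset.Icc_self, Finset.sum_singleton, Finset.sum_singleton, theta_diag,
      D2_eq r τ v 2 le_rfl]
    have hr2 := hr 2 le_rfl
    have h1 : (1 : ℝ) + r 2 ≠ 0 := by positivity
    have h2 : (1 : ℝ) + 2 * r 2 ≠ 0 := by positivity
    simp only [d0, dker, show (2:ℕ) - 1 = 1 from rfl, if_neg one_ne_zero, if_pos rfl, ↓reduceIte]
    field_simp
    ring
  | succ n hn ih =>
    have hrn := hr (n + 1) (by omega)
    have h1 : (1 : ℝ) + r (n + 1) ≠ 0 := by positivity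
    have h2 : (1 : ℝ) + 2 * r (n + 1) ≠ 0 := by positivity
    rw [Finset.sum_Icc_succ_top (by omega : 2 ≤ n + 1),
        Finset.sum_Icc_succ_top (by omega : 2 ≤ n + 1)]
    have key : ∀ f : ℕ → ℝ, ∑ i ∈ Finset.Icc 2 n, theta r (n + 1) i * f i
        = (∑ i ∈ Finset.Icc 2 n, theta r n i * f i) * (r (n + 1) / (1 + 2 * r (n + 1))) := by
      intro f
      rw [Finset.sum_mul]
      apply Finset.sum_congr rfl
      intro i hi
      rw [theta_succ r n i (by simp only [Finset.mem_Icc] at hi; omega)]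
      ring
    rw [key, key, ih, theta_diag, D2_eq r τ v (n + 1) (by omega),
        dker_zero_of_two_le r (n + 1) (n + 1 - 1) (by omega)]
    simp only [d0, dker, Nat.add_sub_cancel, if_neg one_ne_zero, if_pos rfl, ↓reduceIte]
    field_simp
    ring
end
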